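/- Talagrand's contraction lemma: if ℓ(·, y) is L-Lipschitz in its first argument for every y, then the empirical Rademacher complexity of the loss class G = {(x,y) ↦ ℓ(f(x), y) : f ∈ F} is at most L times the empirical Rademacher complexity of F: R̂_N(G) ≤ L · R̂_N(F). -/

import Mathlib

open scoped NNReal
open scoped Pointwise

/-- Empirical Rademacher complexity of a set of sample-vectors `V ⊆ ℝ^N`:
the average over the `2^N` sign patterns of `sup_{v ∈ V} (1/N) Σ_i σ_i v_i`. -/
noncomputable def empRad {N : ℕ} (V : Set (Fin N → ℝ)) : ℝ :=
  (1 / 2 ^ N) * ∑ σ : Fin N → Bool,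
    sSup ((fun v : Fin N → ℝ =>
      (1 / (N : ℝ)) * ∑ i, (if σ i then (1 : ℝ) else -1) * v i) '' V)


lemma csSup_add_csSup_le' {X Y : Set ℝ} (hX : X.Nonempty) (hY : Y.Nonempty) {C : ℝ}
    (h : ∀ x ∈ X, ∀ y ∈ Y, x + y ≤ C) : sSup X + sSup Y ≤ C := by
  have h1 : sSup X ≤ C - sSup Y := by
    refine csSup_le hX fun x hx => ?_
    have : sSup Y ≤ C - x := csSup_le hY fun y hy => by linarith [h x hx y hy]
    linarith
  linarith

lemma core_contraction {α : Type*} {S : Set α} (hS : S.Nonempty) (R φ ψ : α → ℝ) {L : ℝ}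
    (hL : ∀ a ∈ S, ∀ a' ∈ S, φ a - φ a' ≤ |L * ψ a - L * ψ a'|)
    (h1 : BddAbove ((fun a => R a + L * ψ a) '' S))
    (h2 : BddAbove ((fun a => R a - L * ψ a) '' S)) :
    sSup ((fun a => R a + φ a) '' S) + sSup ((fun a => R a - φ a) '' S)
      ≤ sSup ((fun a => R a + L * ψ a) '' S) + sSup ((fun a => R a - L * ψ a) '' S) := by
  apply csSup_add_csSup_le' (hS.image _) (hS.image _)
  rintro _ ⟨a, ha, rfl⟩ _ ⟨a', ha', rfl⟩
  dsimp only
  have hlip := hL a ha a' ha'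
  rcases le_total (L * ψ a') (L * ψ a) with h | h
  · have e1 := le_csSup h1 (Set.mem_image_of_mem (fun a => R a + L * ψ a) ha)
    have e2 := le_csSup h2 (Set.mem_image_of_mem (fun a => R a - L * ψ a) ha')
    rw [abs_of_nonneg (by linarith)] at hlip
    linarith
  · have e1 := le_csSup h1 (Set.mem_image_of_mem (fun a => R a + L * ψ a) ha')
    have e2 := le_csSup h2 (Set.mem_image_of_mem (fun a => R a - L * ψ a) ha)
    rw [abs_of_nonpos (by linarith)] at hlip
    linarith

lemma main_ind {α : Type*} (N : ℕ) (S : Set α) (hS : S.Nonempty)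
    (A B : Fin N → α → ℝ) (L c : ℝ) (hL : 0 ≤ L) (hc : 0 ≤ c)
    (hLip : ∀ i, ∀ a ∈ S, ∀ a' ∈ S, |B i a - B i a'| ≤ L * |A i a - A i a'|)
    (hbA : ∀ i, ∃ M, ∀ a ∈ S, |A i a| ≤ M)
    (hbB : ∀ i, ∃ M, ∀ a ∈ S, |B i a| ≤ M) :
    (∑ σ : Fin N → Bool, sSup ((fun a => c * ∑ i, (if σ i then (1:ℝ) else -1) * B i a) '' S))
      ≤ ∑ σ : Fin N → Bool,
          sSup ((fun a => c * ∑ i, (if σ i then (1:ℝ) else -1) * (L * A i a)) '' S) := by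
  classical
  choose MA hMA using hbA
  choose MB hMB using hbB
  set H : ℕ → Fin N → α → ℝ := fun t i a => if (i : ℕ) < t then L * A i a else B i a with hH
  set P : ℕ → ℝ := fun t => ∑ σ : Fin N → Bool,
      sSup ((fun a => c * ∑ i, (if σ i then (1:ℝ) else -1) * H t i a) '' S) with hP
  have habs : ∀ t (i : Fin N), ∀ a ∈ S, |H t i a| ≤ L * MA i + MB i := by
    intro t i a ha
    have h1 := hMA i a ha
    have h2 := hMB i a ha
    have h3 : 0 ≤ MB i := (abs_nonneg _).trans h2
    have h4 : 0 ≤ MA i := (abs_nonneg _).trans h1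
    simp only [hH]
    split_ifs
    · rw [abs_mul, abs_of_nonneg hL]
      nlinarith
    · nlinarith
  have bdd : ∀ (t : ℕ) (σ : Fin N → Bool),
      BddAbove ((fun a => c * ∑ i, (if σ i then (1:ℝ) else -1) * H t i a) '' S) := by
    intro t σ
    refine ⟨c * ∑ i, (L * MA i + MB i), ?_⟩
    rintro _ ⟨a, ha, rfl⟩
    refine mul_le_mul_of_nonneg_left (Finset.sum_le_sum fun i _ => ?_) hc
    have h := habs t i a ha
    have hsign : (if σ i then (1:ℝ) else -1) * H t i a ≤ |H t i a| := by
      split_ifs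
      · rw [one_mul]; exact le_abs_self _
      · rw [neg_one_mul]; exact neg_le_abs _
    linarith
  have step : ∀ t, P t ≤ P (t + 1) := by
    intro t
    by_cases ht : t < N
    · set k : Fin N := ⟨t, ht⟩ with hk
      set flip : (Fin N → Bool) → (Fin N → Bool) := fun σ => Function.update σ k (!(σ k))
        with hflipdef
      have hinv : Function.Involutive flip := by
        intro σ; funext j
        by_cases hj : j = k
        · subst hj; simp [hflipdef]
        · simp [hflipdef, Function.update_of_ne hj]
      have key : ∀ σ : Fin N → Bool,
          sSup ((fun a => c * ∑ i, (if σ i then (1:ℝ) else -1) * H t i a) '' S)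
          + sSup ((fun a => c * ∑ i, (if flip σ i then (1:ℝ) else -1) * H t i a) '' S)
          ≤ sSup ((fun a => c * ∑ i, (if σ i then (1:ℝ) else -1) * H (t+1) i a) '' S)
          + sSup ((fun a => c * ∑ i, (if flip σ i then (1:ℝ) else -1) * H (t+1) i a) '' S) := by
        intro σ
        set e : Fin N → ℝ := fun i => if σ i then (1:ℝ) else -1 with he
        set R : α → ℝ := fun a => c * ∑ i ∈ Finset.univ.erase k, e i * H t i a with hR
        set φ : α → ℝ := fun a => c * (e k * B k a) with hφ
        set ψ : α → ℝ := fun a => c * (e k * A k a) with hψ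
        have hek : |e k| = 1 := by
          rw [he]; dsimp only; split_ifs <;> simp
        have hflipe : ∀ i : Fin N, i ≠ k →
            (if flip σ i then (1:ℝ) else -1) = e i := by
          intro i hi; rw [hflipdef]; simp [Function.update_of_ne hi, he]
        have hflipk : (if flip σ k then (1:ℝ) else -1) = -(e k) := by
          rw [hflipdef]; simp only [Function.update_self]
          rw [he]; dsimp only; cases hb : σ k <;> simp [hb]
        have hHk : ∀ a, H t k a = B k a := by
          intro a; simp [hH, hk]
        have hHk' : ∀ a, H (t+1) k a = L * A k a := by
          intro a; simp [hH, hk]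
        have hHsame : ∀ (i : Fin N), i ≠ k → ∀ a, H (t+1) i a = H t i a := by
          intro i hi a
          have hit : (i : ℕ) ≠ t := fun h => hi (Fin.ext h)
          simp only [hH]
          by_cases h' : (i:ℕ) < t
          · rw [if_pos h', if_pos (Nat.lt_succ_of_lt h')]
          · rw [if_neg h', if_neg (by omega)]
        have eq1 : (fun a => c * ∑ i, (if σ i then (1:ℝ) else -1) * H t i a)
            = fun a => R a + φ a := by
          funext a
          rw [← Finset.sum_erase_add _ _ (Finset.mem_univ k), hHk a]
          simp only [hR, hφ, he]
          ring
        have eq2 : (fun a => c * ∑ i, (if flip σ i then (1:ℝ) else -1) * H t i a)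
            = fun a => R a - φ a := by
          funext a
          rw [← Finset.sum_erase_add _ _ (Finset.mem_univ k), hHk a, hflipk]
          rw [Finset.sum_congr rfl (fun i hi => by
            rw [hflipe i (Finset.ne_of_mem_erase hi)])]
          simp only [hR, hφ, he]
          ring
        have eq3 : (fun a => c * ∑ i, (if σ i then (1:ℝ) else -1) * H (t+1) i a)
            = fun a => R a + L * ψ a := by
          funext a
          rw [← Finset.sum_erase_add _ _ (Finset.mem_univ k), hHk' a]
          rw [Finset.sum_congr rfl (fun i hi => by
            rw [hHsame i (Finset.ne_of_mem_erase hi) a])]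
          simp only [hR, hψ, he]
          ring
        have eq4 : (fun a => c * ∑ i, (if flip σ i then (1:ℝ) else -1) * H (t+1) i a)
            = fun a => R a - L * ψ a := by
          funext a
          rw [← Finset.sum_erase_add _ _ (Finset.mem_univ k), hHk' a, hflipk]
          rw [Finset.sum_congr rfl (fun i hi => by
            rw [hflipe i (Finset.ne_of_mem_erase hi),
              hHsame i (Finset.ne_of_mem_erase hi) a])]
          simp only [hR, hψ, he]
          ring
        rw [eq1, eq2, eq3, eq4]
        refine core_contraction hS R φ ψ ?_ ?_ ?_
        · intro a ha a' ha'
          have h := hLip k a ha a' ha'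
          have h1 : φ a - φ a' = c * e k * (B k a - B k a') := by rw [hφ]; dsimp only; ring
          have h2 : L * ψ a - L * ψ a' = c * e k * (L * (A k a - A k a')) := by
            rw [hψ]; dsimp only; ring
          have hce : |c * e k| = c := by rw [abs_mul, hek, abs_of_nonneg hc, mul_one]
          rw [h1, h2, abs_mul, hce]
          calc c * e k * (B k a - B k a') ≤ |c * e k * (B k a - B k a')| := le_abs_self _
            _ = c * |B k a - B k a'| := by rw [abs_mul, hce]
            _ ≤ c * (L * |A k a - A k a'|) := mul_le_mul_of_nonneg_left h hc
            _ = c * |L * (A k a - A k a')| := by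
                rw [abs_mul, abs_of_nonneg hL]
        · rw [← eq3]; exact bdd (t+1) σ
        · rw [← eq4]; exact bdd (t+1) (flip σ)
      have hflipsum : ∀ (G : (Fin N → Bool) → ℝ), (∑ σ, G (flip σ)) = ∑ σ, G σ :=
        fun G => Fintype.sum_equiv hinv.toPerm _ _ (fun σ => rfl)
      have hsum1 : (∑ σ : Fin N → Bool,
            (sSup ((fun a => c * ∑ i, (if σ i then (1:ℝ) else -1) * H t i a) '' S)
             + sSup ((fun a => c * ∑ i, (if flip σ i then (1:ℝ) else -1) * H t i a) '' S)))
          = P t + P t := by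
        rw [Finset.sum_add_distrib,
          hflipsum (fun σ =>
            sSup ((fun a => c * ∑ i, (if σ i then (1:ℝ) else -1) * H t i a) '' S))]
      have hsum2 : (∑ σ : Fin N → Bool,
            (sSup ((fun a => c * ∑ i, (if σ i then (1:ℝ) else -1) * H (t+1) i a) '' S)
             + sSup ((fun a => c * ∑ i, (if flip σ i then (1:ℝ) else -1) * H (t+1) i a) '' S)))
          = P (t+1) + P (t+1) := by
        rw [Finset.sum_add_distrib,
          hflipsum (fun σ =>
            sSup ((fun a => c * ∑ i, (if σ i then (1:ℝ) else -1) * H (t+1) i a) '' S))]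
      have hle := Finset.sum_le_sum (fun σ (_ : σ ∈ Finset.univ) => key σ)
      rw [hsum1, hsum2] at hle
      linarith
    · refine le_of_eq (Finset.sum_congr rfl fun σ _ => ?_)
      have hfe : (fun a => c * ∑ i, (if σ i then (1:ℝ) else -1) * H t i a)
          = (fun a => c * ∑ i, (if σ i then (1:ℝ) else -1) * H (t+1) i a) := by
        funext a
        refine congrArg (c * ·) (Finset.sum_congr rfl fun i _ => ?_)
        have h1 : (i : ℕ) < t := lt_of_lt_of_le i.isLt (le_of_not_gt ht)
        simp only [hH, if_pos h1, if_pos (Nat.lt_succ_of_lt h1)]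
      rw [hfe]
  have hmono : Monotone P := monotone_nat_of_le_succ step
  have h0N := hmono (Nat.zero_le N)
  have e0 : P 0 = ∑ σ : Fin N → Bool,
      sSup ((fun a => c * ∑ i, (if σ i then (1:ℝ) else -1) * B i a) '' S) := by
    simp [hP, hH]
  have eN : P N = ∑ σ : Fin N → Bool,
      sSup ((fun a => c * ∑ i, (if σ i then (1:ℝ) else -1) * (L * A i a)) '' S) := by
    simp only [hP]
    refine Finset.sum_congr rfl fun σ _ => ?_
    have hfe : (fun a => c * ∑ i, (if σ i then (1:ℝ) else -1) * H N i a)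
        = (fun a => c * ∑ i, (if σ i then (1:ℝ) else -1) * (L * A i a)) := by
      funext a
      refine congrArg (c * ·) (Finset.sum_congr rfl fun i _ => ?_)
      simp only [hH, if_pos i.isLt]
    rw [hfe]
  rw [← e0, ← eN]; exact h0N

lemma coord_bdd {N : ℕ} (hN : 0 < N) (V : Set (Fin N → ℝ))
    (hbdd : ∀ σ : Fin N → Bool, BddAbove
      ((fun v : Fin N → ℝ => (1 / (N : ℝ)) * ∑ i, (if σ i then (1:ℝ) else -1) * v i) '' V))
    (i : Fin N) :
    ∃ M, ∀ v ∈ V, |v i| ≤ M := by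
  classical
  choose K hK using hbdd
  set c : ℝ := 1 / (N:ℝ) with hc
  have hcpos : 0 < c := by rw [hc]; positivity
  set σ1 : Fin N → Bool := fun _ => true with hσ1
  set σ2 : Fin N → Bool := fun j => decide (j = i) with hσ2
  set σ3 : Fin N → Bool := fun j => !(decide (j = i)) with hσ3
  set σ4 : Fin N → Bool := fun _ => false with hσ4
  refine ⟨(K σ1 + K σ2) / (2*c) ⊔ (K σ3 + K σ4) / (2*c), ?_⟩
  intro v hv
  have h1 := hK σ1 (Set.mem_image_of_mem _ hv)
  have h2 := hK σ2 (Set.mem_image_of_mem _ hv)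
  have h3 := hK σ3 (Set.mem_image_of_mem _ hv)
  have h4 := hK σ4 (Set.mem_image_of_mem _ hv)

  have key12 : (∑ j, (if σ1 j then (1:ℝ) else -1) * v j)
      + (∑ j, (if σ2 j then (1:ℝ) else -1) * v j) = 2 * v i := by
    rw [← Finset.sum_add_distrib]
    rw [Finset.sum_congr rfl (fun j _ => show
      (if σ1 j then (1:ℝ) else -1) * v j + (if σ2 j then (1:ℝ) else -1) * v j
        = if j = i then 2 * v j else 0 by
      simp only [hσ1, hσ2]
      by_cases h : j = i <;> simp [h] <;> ring)]
    rw [Finset.sum_ite_eq' Finset.univ i (fun j => 2 * v j), if_pos (Finset.mem_univ i)]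
  have key34 : (∑ j, (if σ3 j then (1:ℝ) else -1) * v j)
      + (∑ j, (if σ4 j then (1:ℝ) else -1) * v j) = -(2 * v i) := by
    rw [← Finset.sum_add_distrib]
    rw [Finset.sum_congr rfl (fun j _ => show
      (if σ3 j then (1:ℝ) else -1) * v j + (if σ4 j then (1:ℝ) else -1) * v j
        = if j = i then -(2 * v j) else 0 by
      simp only [hσ3, hσ4]
      by_cases h : j = i <;> simp [h] <;> ring)]
    rw [Finset.sum_ite_eq' Finset.univ i (fun j => -(2 * v j)), if_pos (Finset.mem_univ i)]
  have hup : v i ≤ (K σ1 + K σ2) / (2*c) := by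
    rw [le_div_iff₀ (by positivity)]
    have : c * (2 * v i) ≤ K σ1 + K σ2 := by
      rw [← key12]; rw [mul_add]; exact add_le_add h1 h2
    calc v i * (2*c) = c * (2 * v i) := by ring
      _ ≤ K σ1 + K σ2 := this
  have hlow : -(v i) ≤ (K σ3 + K σ4) / (2*c) := by
    rw [le_div_iff₀ (by positivity)]
    have : c * (-(2 * v i)) ≤ K σ3 + K σ4 := by
      rw [← key34]; rw [mul_add]; exact add_le_add h3 h4
    calc -(v i) * (2*c) = c * (-(2 * v i)) := by ring
      _ ≤ K σ3 + K σ4 := this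
  refine abs_le.2 ⟨?_, hup.trans (le_max_left _ _)⟩
  have := hlow.trans (le_max_right ((K σ1 + K σ2) / (2*c)) ((K σ3 + K σ4) / (2*c)))
  linarith

/-- Talagrand's contraction lemma: if `ℓ(·, y)` is `L`-Lipschitz in its
first argument for every `y`, then the empirical Rademacher complexity of the loss
class is at most `L` times that of `F`, on any fixed sample. -/
theorem stmt_7 {𝓧 𝓨 : Type*} (N : ℕ) (hN : 0 < N)
    (x : Fin N → 𝓧) (y : Fin N → 𝓨)
    (F : Set (𝓧 → ℝ)) (hF : F.Nonempty)
    (ℓ : ℝ → 𝓨 → ℝ) (L : ℝ≥0)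
    (hLip : ∀ yy : 𝓨, LipschitzWith L (fun a => ℓ a yy))
    (hbddF : ∀ σ : Fin N → Bool, BddAbove
      ((fun v : Fin N → ℝ => (1 / (N : ℝ)) * ∑ i, (if σ i then (1 : ℝ) else -1) * v i) ''
        ((fun f : 𝓧 → ℝ => fun i => f (x i)) '' F)))
    (hbddG : ∀ σ : Fin N → Bool, BddAbove
      ((fun v : Fin N → ℝ => (1 / (N : ℝ)) * ∑ i, (if σ i then (1 : ℝ) else -1) * v i) ''
        ((fun f : 𝓧 → ℝ => fun i => ℓ (f (x i)) (y i)) '' F))) :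
    empRad ((fun f : 𝓧 → ℝ => fun i => ℓ (f (x i)) (y i)) '' F)
      ≤ L * empRad ((fun f : 𝓧 → ℝ => fun i => f (x i)) '' F) := by
  classical
  have hL0 : (0:ℝ) ≤ (L:ℝ) := L.coe_nonneg
  have hc : (0:ℝ) ≤ 1/(N:ℝ) := by positivity
  have hbA : ∀ i : Fin N, ∃ M, ∀ f ∈ F, |f (x i)| ≤ M := by
    intro i
    obtain ⟨M, hM⟩ := coord_bdd hN _ hbddF i
    exact ⟨M, fun f hf => by simpa using hM _ (Set.mem_image_of_mem _ hf)⟩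
  have hbB : ∀ i : Fin N, ∃ M, ∀ f ∈ F, |ℓ (f (x i)) (y i)| ≤ M := by
    intro i
    obtain ⟨M, hM⟩ := coord_bdd hN _ hbddG i
    exact ⟨M, fun f hf => by simpa using hM _ (Set.mem_image_of_mem _ hf)⟩
  have hlip : ∀ i : Fin N, ∀ f ∈ F, ∀ f' ∈ F,
      |ℓ (f (x i)) (y i) - ℓ (f' (x i)) (y i)| ≤ (L:ℝ) * |f (x i) - f' (x i)| := by
    intro i f _ f' _
    simpa [Real.dist_eq] using (hLip (y i)).dist_le_mul (f (x i)) (f' (x i))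
  have main := main_ind N F hF (fun i f => f (x i)) (fun i f => ℓ (f (x i)) (y i))
      (L:ℝ) (1/(N:ℝ)) hL0 hc hlip hbA hbB
  have key : ∀ σ : Fin N → Bool,
      sSup ((fun f : 𝓧 → ℝ =>
          (1/(N:ℝ)) * ∑ i, (if σ i then (1:ℝ) else -1) * ((L:ℝ) * f (x i))) '' F)
        = (L:ℝ) * sSup ((fun f : 𝓧 → ℝ =>
          (1/(N:ℝ)) * ∑ i, (if σ i then (1:ℝ) else -1) * f (x i)) '' F) := by
    intro σ
    have h1 : (fun f : 𝓧 → ℝ =>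
          (1/(N:ℝ)) * ∑ i, (if σ i then (1:ℝ) else -1) * ((L:ℝ) * f (x i)))
        = fun f => (L:ℝ) * ((1/(N:ℝ)) * ∑ i, (if σ i then (1:ℝ) else -1) * f (x i)) := by
      funext f
      rw [Finset.sum_congr rfl (fun i _ => show
          (if σ i then (1:ℝ) else -1) * ((L:ℝ) * f (x i))
            = (L:ℝ) * ((if σ i then (1:ℝ) else -1) * f (x i)) by ring),
        ← Finset.mul_sum]
      ring
    rw [h1]
    have h2 : ((fun f : 𝓧 → ℝ =>
          (L:ℝ) * ((1/(N:ℝ)) * ∑ i, (if σ i then (1:ℝ) else -1) * f (x i))) '' F)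
        = (L:ℝ) • ((fun f : 𝓧 → ℝ =>
          (1/(N:ℝ)) * ∑ i, (if σ i then (1:ℝ) else -1) * f (x i)) '' F) := by
      rw [← Set.image_smul, Set.image_image]
      rfl
    rw [h2, Real.sSup_smul_of_nonneg hL0, smul_eq_mul]
  rw [empRad, empRad]
  simp only [Set.image_image]
  have hrhs : (∑ σ : Fin N → Bool, sSup ((fun f : 𝓧 → ℝ =>
          (1/(N:ℝ)) * ∑ i, (if σ i then (1:ℝ) else -1) * ((L:ℝ) * f (x i))) '' F))
      = (L:ℝ) * ∑ σ : Fin N → Bool, sSup ((fun f : 𝓧 → ℝ =>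
          (1/(N:ℝ)) * ∑ i, (if σ i then (1:ℝ) else -1) * f (x i)) '' F) := by
    rw [Finset.mul_sum]
    exact Finset.sum_congr rfl fun σ _ => key σ
  rw [hrhs] at main
  have h2N : (0:ℝ) ≤ 1 / 2 ^ N := by positivity
  calc (1 / 2 ^ N : ℝ) * ∑ σ : Fin N → Bool, sSup ((fun f : 𝓧 → ℝ =>
          (1/(N:ℝ)) * ∑ i, (if σ i then (1:ℝ) else -1) * ℓ (f (x i)) (y i)) '' F)
      ≤ (1 / 2 ^ N : ℝ) * ((L:ℝ) * ∑ σ : Fin N → Bool, sSup ((fun f : 𝓧 → ℝ =>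
          (1/(N:ℝ)) * ∑ i, (if σ i then (1:ℝ) else -1) * f (x i)) '' F)) :=
        mul_le_mul_of_nonneg_left main h2N
    _ = (L:ℝ) * ((1 / 2 ^ N : ℝ) * ∑ σ : Fin N → Bool, sSup ((fun f : 𝓧 → ℝ =>
          (1/(N:ℝ)) * ∑ i, (if σ i then (1:ℝ) else -1) * f (x i)) '' F)) := by ring
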